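/- Let G be a graph with a universal vertex u such that G − u has at least one isolated vertex. Then ρ(G) = ρ(G − u) + 1, where ρ denotes the maximum double neighborhood number. Moreover, if S is a maximum double neighborhood sequence of G − u, then S followed by u is a maximum double neighborhood sequence of G. -/

import Mathlib

open SimpleGraph

variable {V : Type*}

/-- The closed neighborhood of a vertex. -/
def cnbr (G : SimpleGraph V) (v : V) : Set V := insert v (G.neighborSet v)

/-- The number of vertices in the list `l` that dominate `u` (i.e. whose closed
neighborhood contains `u`). -/
noncomputable def domCount (G : SimpleGraph V) (u : V) (l : List V) : ℕ :=
  {w | w ∈ l ∧ u ∈ cnbr G w}.ncard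

/-- A double neighborhood sequence (DNS): a sequence of distinct vertices in which each
vertex dominates some vertex dominated at most once by its predecessors. -/
def IsDNS (G : SimpleGraph V) (l : List V) : Prop :=
  l.Nodup ∧ ∀ i : Fin l.length, ∃ u ∈ cnbr G (l.get i), domCount G u (l.take i) ≤ 1

/-- A double dominating sequence (DDS): a DNS whose underlying set is doubly dominating. -/
def IsDDS (G : SimpleGraph V) (l : List V) : Prop :=
  IsDNS G l ∧ ∀ v, 2 ≤ domCount G v l

/-- The Grundy double domination number: maximum length of a DDS. -/
noncomputable def gddn (G : SimpleGraph V) : ℕ :=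
  sSup {n | ∃ l : List V, IsDDS G l ∧ l.length = n}

/-- The maximum double neighborhood number: maximum length of a DNS. -/
noncomputable def mdnn (G : SimpleGraph V) : ℕ :=
  sSup {n | ∃ l : List V, IsDNS G l ∧ l.length = n}

/-- A legal (Grundy domination) sequence. -/
def IsLegal (G : SimpleGraph V) (l : List V) : Prop :=
  l.Nodup ∧ ∀ i : Fin l.length, ∃ u ∈ cnbr G (l.get i), domCount G u (l.take i) = 0

/-- A dominating sequence: legal sequence whose underlying set dominates. -/
def IsDomSeq (G : SimpleGraph V) (l : List V) : Prop :=
  IsLegal G l ∧ ∀ v, 1 ≤ domCount G v l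

/-- The Grundy domination number: maximum length of a dominating sequence. -/
noncomputable def grundy (G : SimpleGraph V) : ℕ :=
  sSup {n | ∃ l : List V, IsDomSeq G l ∧ l.length = n}

/-- The double domination number: minimum size of a double dominating set. -/
noncomputable def ddomNum (G : SimpleGraph V) : ℕ :=
  sInf {n | ∃ D : Set V, (∀ v, 2 ≤ {w | w ∈ D ∧ v ∈ cnbr G w}.ncard) ∧ D.ncard = n}


lemma mdnn_spec {W : Type*} [Finite W] (G : SimpleGraph W) :
    ∃ l : List W, IsDNS G l ∧ l.length = mdnn G ∧
      ∀ l' : List W, IsDNS G l' → l'.length ≤ mdnn G := by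
  classical
  have : Fintype W := Fintype.ofFinite W
  have hbdd : BddAbove {n | ∃ l : List W, IsDNS G l ∧ l.length = n} := by
    refine ⟨Fintype.card W, ?_⟩
    rintro n ⟨l, hl, rfl⟩
    exact hl.1.length_le_card
  have hne : {n | ∃ l : List W, IsDNS G l ∧ l.length = n}.Nonempty :=
    ⟨0, [], ⟨List.nodup_nil, fun i => i.elim0⟩, rfl⟩
  obtain ⟨l, hl, hlen⟩ := Nat.sSup_mem hne hbdd
  exact ⟨l, hl, hlen, fun l' hl' => le_csSup hbdd ⟨l', hl', rfl⟩⟩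


lemma mem_cnbr {G : SimpleGraph V} {v w : V} : v ∈ cnbr G w ↔ v = w ∨ G.Adj w v := by
  simp [cnbr]

lemma mem_cnbr_self (G : SimpleGraph V) (v : V) : v ∈ cnbr G v := Set.mem_insert _ _

lemma domCount_le_length (G : SimpleGraph V) (v : V) (l : List V) :
    domCount G v l ≤ l.length := by
  classical
  have h1 : {w | w ∈ l ∧ v ∈ cnbr G w} ⊆ (l.toFinset : Set V) := by
    intro w hw; simpa using hw.1
  calc {w | w ∈ l ∧ v ∈ cnbr G w}.ncard ≤ (l.toFinset : Set V).ncard :=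
        Set.ncard_le_ncard h1 (l.toFinset.finite_toSet)
    _ = l.toFinset.card := Set.ncard_coe_finset _
    _ ≤ l.length := l.toFinset_card_le

lemma domCount_mono (G : SimpleGraph V) (v : V) {l₁ l₂ : List V}
    (h : ∀ x ∈ l₁, x ∈ l₂) : domCount G v l₁ ≤ domCount G v l₂ := by
  classical
  apply Set.ncard_le_ncard
  · exact fun w hw => ⟨h w hw.1, hw.2⟩
  · exact Set.Finite.subset (l₂.toFinset.finite_toSet) (by intro w hw; simpa using hw.1)

lemma domCount_univ {G : SimpleGraph V} {u : V} (huniv : ∀ w, w ≠ u → G.Adj u w)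
    {l : List V} (hl : l.Nodup) : domCount G u l = l.length := by
  classical
  have h1 : {w | w ∈ l ∧ u ∈ cnbr G w} = {w | w ∈ l} := by
    ext w
    simp only [Set.mem_setOf_eq, and_iff_left_iff_imp]
    intro _
    by_cases h : w = u
    · subst h; exact mem_cnbr_self G w
    · exact mem_cnbr.mpr (Or.inr ((huniv w h).symm))
  have h2 : {w | w ∈ l} = (l.toFinset : Set V) := by ext; simp
  rw [domCount, h1, h2, Set.ncard_coe_finset, List.toFinset_card_of_nodup hl]

lemma cnbr_induce_iff (G : SimpleGraph V) {S : Set V} (x y : S) :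
    (y : V) ∈ cnbr G (x : V) ↔ y ∈ cnbr (G.induce S) x := by
  simp [mem_cnbr, SimpleGraph.comap_adj, Subtype.val_inj, SimpleGraph.induce]

lemma domCount_induce (G : SimpleGraph V) {S : Set V} (v : S) (l : List S) :
    domCount (G.induce S) v l = domCount G (v : V) (l.map Subtype.val) := by
  classical
  have hset : {w | w ∈ l.map Subtype.val ∧ (v : V) ∈ cnbr G w} =
      Subtype.val '' {w | w ∈ l ∧ v ∈ cnbr (G.induce S) w} := by
    ext w
    simp only [Set.mem_image, Set.mem_setOf_eq, List.mem_map]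
    constructor
    · rintro ⟨⟨w', hw', rfl⟩, hcn⟩
      exact ⟨w', ⟨hw', (cnbr_induce_iff G w' v).mp hcn⟩, rfl⟩
    · rintro ⟨w', ⟨hw', hcn⟩, rfl⟩
      exact ⟨⟨w', hw', rfl⟩, (cnbr_induce_iff G w' v).mpr hcn⟩
  rw [domCount, domCount, hset, Set.ncard_image_of_injective _ Subtype.val_injective]

lemma isDNS_extend (G : SimpleGraph V) (u : V)
    (huniv : ∀ w, w ≠ u → G.Adj u w)
    (hiso : ∃ a : ({w : V | w ≠ u} : Set V), ∀ b,
      ¬ (G.induce {w : V | w ≠ u}).Adj a b)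
    (l : List ({w : V | w ≠ u} : Set V))
    (hl : IsDNS (G.induce {w : V | w ≠ u}) l) :
    IsDNS G (l.map Subtype.val ++ [u]) := by
  classical
  obtain ⟨a, ha⟩ := hiso
  have hlen : (l.map Subtype.val ++ [u]).length = l.length + 1 := by simp
  constructor
  · rw [List.nodup_append]
    refine ⟨hl.1.map Subtype.val_injective, List.nodup_singleton u, ?_⟩
    intro x hx
    simp only [List.mem_map] at hx
    obtain ⟨x', _, rfl⟩ := hx
    simp only [List.mem_singleton]
    rintro b rfl
    exact x'.2
  · intro i
    by_cases hi : (i : ℕ) < l.length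
    · -- inner step
      have hget : (l.map Subtype.val ++ [u]).get i = (l.get ⟨i, hi⟩ : V) := by
        rw [List.get_eq_getElem, List.getElem_append_left (by simpa using hi), List.getElem_map]
        rfl
      have htake : (l.map Subtype.val ++ [u]).take i = (l.take i).map Subtype.val := by
        rw [List.take_append_of_le_length (by simpa using hi.le), List.map_take]
      obtain ⟨w, hw1, hw2⟩ := hl.2 ⟨i, hi⟩
      refine ⟨(w : V), ?_, ?_⟩
      · rw [hget]; exact (cnbr_induce_iff G _ _).mpr hw1
      · rw [htake, ← domCount_induce]
        simpa using hw2
    · -- last step: the vertex u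
      have hieq : (i : ℕ) = l.length := by
        have h2 : (i : ℕ) < l.length + 1 := by simpa using i.2
        omega
      have hget : (l.map Subtype.val ++ [u]).get i = u := by
        rw [List.get_eq_getElem, List.getElem_append_right (by simp [hieq])]
        simp
      have htake : (l.map Subtype.val ++ [u]).take i = l.map Subtype.val := by
        exact List.take_left' (by simpa using hieq.symm)
      refine ⟨(a : V), ?_, ?_⟩
      · rw [hget, mem_cnbr]
        exact Or.inr (huniv a a.2)
      · rw [htake, ← domCount_induce]
        have hsub : {w | w ∈ l ∧ a ∈ cnbr (G.induce {w : V | w ≠ u}) w} ⊆ {a} := by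
          intro w hw
          rcases mem_cnbr.mp hw.2 with h | h
          · simp only [Set.mem_singleton_iff]
            exact h.symm
          · exact absurd h.symm (ha w)
        calc domCount (G.induce {w : V | w ≠ u}) a l
            ≤ ({a} : Set _).ncard := Set.ncard_le_ncard hsub (Set.finite_singleton a)
          _ = 1 := Set.ncard_singleton a

lemma isDNS_restrict (G : SimpleGraph V) (u : V)
    (huniv : ∀ w, w ≠ u → G.Adj u w)
    (L : List V) (hL : IsDNS G L) :
    ∃ l : List ({w : V | w ≠ u} : Set V),
      IsDNS (G.induce {w : V | w ≠ u}) l ∧ L.length ≤ l.length + 1 := by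
  classical
  set L' : List V := L.filter (fun v => decide (v ≠ u)) with hL'def
  have hmemL' : ∀ v ∈ L', v ≠ u := by
    intro v hv
    have := List.of_mem_filter hv
    simpa using this
  refine ⟨L'.pmap (fun v h => (⟨v, h⟩ : ({w : V | w ≠ u} : Set V))) hmemL', ?_, ?_⟩
  · set l := L'.pmap (fun v h => (⟨v, h⟩ : ({w : V | w ≠ u} : Set V))) hmemL' with hldef
    have hmap : l.map Subtype.val = L' := by
      rw [hldef, List.map_pmap]
      show List.pmap (fun a _ => a) L' hmemL' = L'
      rw [List.pmap_eq_map]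
      exact List.map_id _
    have hlenl : l.length = L'.length := by simp [hldef]
    have hL'nodup : L'.Nodup := hL.1.filter _
    have hlnodup : l.Nodup := by
      have : (l.map Subtype.val).Nodup := hmap ▸ hL'nodup
      exact this.of_map
    refine ⟨hlnodup, ?_⟩
    intro j
    -- the j-th element of l, as an element of V
    set x : V := (l.get j : V) with hxdef
    have hjL' : (j : ℕ) < L'.length := by rw [← hlenl]; exact j.2
    -- (l.take j).map val ++ [x] is a sublist of L
    have hstep : ((l.map Subtype.val).take (j + 1)).Sublist L := by
      have h2 : (l.map Subtype.val).Sublist L := by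
        rw [hmap]; exact List.filter_sublist
      exact (List.take_sublist _ _).trans h2
    have hjm : (j : ℕ) < (l.map Subtype.val).length := by simpa using j.2
    have htake1 : (l.map Subtype.val).take (j + 1) =
        (l.map Subtype.val).take j ++ [x] := by
      rw [← List.take_concat_get hjm, List.concat_eq_append]
      congr 1
      rw [List.getElem_map]
      rfl
    rw [htake1] at hstep
    have hstep' := hstep
    obtain ⟨r₁, r₂, hLeq, hsub1, hsub2⟩ := List.append_sublist_iff.mp hstep
    -- x ∈ r₂, split r₂
    have hxr₂ : x ∈ r₂ := hsub2.mem (List.mem_singleton_self x)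
    obtain ⟨s₁, s₂, hr₂eq⟩ := List.mem_iff_append.mp hxr₂
    set t₁ : List V := r₁ ++ s₁ with ht₁def
    have hLsplit : L = t₁ ++ x :: s₂ := by
      rw [hLeq, hr₂eq, ht₁def, List.append_assoc]
    have hit : t₁.length < L.length := by
      rw [hLsplit]; simp
    have hgetL : L.get ⟨t₁.length, hit⟩ = x := by
      rw [List.get_eq_getElem, List.getElem_of_eq hLsplit,
        List.getElem_append_right (le_refl _)]
      simp
    have htakeL : L.take t₁.length = t₁ := by
      conv_lhs => rw [hLsplit]
      exact List.take_left
    -- membership of prefix into t₁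
    have hmemt₁ : ∀ y ∈ (l.take j).map Subtype.val, y ∈ t₁ := by
      intro y hy
      have hy' : y ∈ (l.map Subtype.val).take j := by
        rw [← List.map_take]; exact hy
      have h1 : y ∈ r₁ := hsub1.mem hy'
      exact List.mem_append_left _ h1
    have ht₁sub : t₁.Sublist L := by
      rw [hLsplit]; exact List.sublist_append_left _ _
    have ht₁nodup : t₁.Nodup := hL.1.sublist ht₁sub
    obtain ⟨w', hw'1, hw'2⟩ := hL.2 ⟨t₁.length, hit⟩
    rw [hgetL] at hw'1
    rw [htakeL] at hw'2
    by_cases hw'u : w' = u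
    · -- the witness was u itself: then t₁ is short, so j ≤ 1
      subst hw'u
      rw [domCount_univ huniv ht₁nodup] at hw'2
      have hjle : (j : ℕ) ≤ 1 := by
        have h1 : ((l.map Subtype.val).take j).length ≤ r₁.length := hsub1.length_le
        have h2 : ((l.map Subtype.val).take j).length = (j : ℕ) := by
          simp only [List.length_take, List.length_map]
          omega
        have h3 : r₁.length ≤ t₁.length := by rw [ht₁def]; simp
        omega
      refine ⟨l.get j, mem_cnbr_self _ _, ?_⟩
      calc domCount _ (l.get j) (l.take j) ≤ (l.take j).length :=
            domCount_le_length _ _ _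
        _ ≤ 1 := by
            simp only [List.length_take]
            omega
    · refine ⟨⟨w', hw'u⟩, ?_, ?_⟩
      · exact (cnbr_induce_iff G (l.get j) ⟨w', hw'u⟩).mp hw'1
      · rw [domCount_induce]
        calc domCount G w' ((l.take j).map Subtype.val) ≤ domCount G w' t₁ :=
              domCount_mono G w' hmemt₁
          _ ≤ 1 := hw'2
  · -- length bound
    have hlen1 : (L'.pmap (fun v h => (⟨v, h⟩ : ({w : V | w ≠ u} : Set V))) hmemL').length
        = L'.length := by simp
    rw [hlen1]
    set p : V → Bool := fun v => decide (v ≠ u) with hpdef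
    have h1 : L.length = L.countP p + L.countP (fun a => decide ¬ (p a = true)) :=
      List.length_eq_countP_add_countP p
    have h2 : (fun a => decide ¬ (p a = true)) = fun a => a == u := by
      funext a
      by_cases h : a = u <;> simp [hpdef, h]
    rw [h2] at h1
    have h3 : L.countP (fun a => a == u) = L.count u := rfl
    rw [h3] at h1
    have h4 : L.count u ≤ 1 := List.nodup_iff_count_le_one.mp hL.1 u
    have h5 : L'.length = L.countP p := List.countP_eq_length_filter.symm
    omega

/-- if u is universal and G−u has an isolated vertex, then
ρ(G) = ρ(G−u) + 1, and appending u to any MDNS of G−u gives a MDNS of G. -/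
theorem stmt11 [Fintype V] (G : SimpleGraph V) (u : V)
    (huniv : ∀ w, w ≠ u → G.Adj u w)
    (hiso : ∃ a : ({w : V | w ≠ u} : Set V), ∀ b,
      ¬ (G.induce {w : V | w ≠ u}).Adj a b) :
    mdnn G = mdnn (G.induce {w : V | w ≠ u}) + 1 ∧
    ∀ l : List ({w : V | w ≠ u} : Set V),
      IsDNS (G.induce {w : V | w ≠ u}) l → l.length = mdnn (G.induce {w : V | w ≠ u}) →
      IsDNS G (l.map Subtype.val ++ [u]) ∧
      (l.map Subtype.val ++ [u]).length = mdnn G := by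
  classical
  obtain ⟨lH, hlH, hlHlen, hHmax⟩ := mdnn_spec (G.induce {w : V | w ≠ u})
  obtain ⟨LG, hLG, hLGlen, hGmax⟩ := mdnn_spec G
  have hle1 : mdnn (G.induce {w : V | w ≠ u}) + 1 ≤ mdnn G := by
    have h1 := isDNS_extend G u huniv hiso lH hlH
    have h2 := hGmax _ h1
    have h3 : lH.length + 1 ≤ mdnn G := by simpa using h2
    omega
  have hle2 : mdnn G ≤ mdnn (G.induce {w : V | w ≠ u}) + 1 := by
    obtain ⟨l, hl, hlen⟩ := isDNS_restrict G u huniv LG hLG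
    have h4 := hHmax l hl
    omega
  have heq : mdnn G = mdnn (G.induce {w : V | w ≠ u}) + 1 := le_antisymm hle2 hle1
  refine ⟨heq, ?_⟩
  intro l hl hlen
  refine ⟨isDNS_extend G u huniv hiso l hl, ?_⟩
  have h5 : (l.map Subtype.val ++ [u]).length = l.length + 1 := by simp
  omega
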